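/- Let A_n ∈ ℝ^{J_n×J_n} with spectral radii ρ^{(n)}, and consider the dynamics X_{t+1} = X_t ×{A₁, A₂, …, A_N}. If ∏_{n=1}^{N} ρ^{(n)} < 1, the equilibrium X = 0 is asymptotically stable; if ∏_{n=1}^{N} ρ^{(n)} > 1, it is unstable. -/

import Mathlib

open scoped BigOperators

/-- Multi-index for an `N`-dimensional shape `J`. -/
abbrev MIdx {N : ℕ} (J : Fin N → ℕ) := ∀ n, Fin (J n)

/-- An even-order paired tensor of shape `J₁×I₁×⋯×J_N×I_N`, viewed with its
index pairs grouped: entry `A j i = A_{j₁ i₁ … j_N i_N}`. -/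
abbrev PTensor {N : ℕ} (R : Type) (J I : Fin N → ℕ) := MIdx J → MIdx I → R

/-- The Einstein product of even-order paired tensors. -/
def einstein {N : ℕ} {R : Type} [CommRing R] {J K I : Fin N → ℕ}
    (A : PTensor R J K) (B : PTensor R K I) : PTensor R J I :=
  fun j i => ∑ k : MIdx K, A j k * B k i

/-- The U-transpose, swapping each index pair. -/
def transp {N : ℕ} {R : Type} [CommRing R] {J I : Fin N → ℕ}
    (A : PTensor R J I) : PTensor R I J :=
  fun i j => A j i

/-- The U-identity tensor. -/
def uid {N : ℕ} (R : Type) [CommRing R] (J : Fin N → ℕ) : PTensor R J J :=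
  fun j i => if j = i then 1 else 0

/-- Einstein-product powers `A^k`. -/
def epow {N : ℕ} {R : Type} [CommRing R] {J : Fin N → ℕ}
    (A : PTensor R J J) : ℕ → PTensor R J J
  | 0 => uid R J
  | (k+1) => einstein A (epow A k)

/-- Action of an even-order paired tensor on an `N`-th order tensor
(the Einstein product `A * x`). -/
def mulE {N : ℕ} {R : Type} [CommRing R] {J I : Fin N → ℕ}
    (A : PTensor R J I) (x : MIdx I → R) : MIdx J → R :=
  fun j => ∑ i, A j i * x i

/-- Frobenius norm of an `N`-th order tensor. -/
noncomputable def fro {N : ℕ} {J : Fin N → ℕ} (x : MIdx J → ℝ) : ℝ :=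
  Real.sqrt (∑ j, x j ^ 2)

/-- The scalar `xᵀ * A * y` (Einstein products). -/
def bilin {N : ℕ} {J : Fin N → ℕ} (A : PTensor ℝ J J)
    (x y : MIdx J → ℝ) : ℝ :=
  ∑ j, ∑ i, x j * A j i * y i

/-- U-positive definiteness: `Xᵀ * A * X > 0` for all nonzero `X`. -/
def UPosDef {N : ℕ} {J : Fin N → ℕ} (A : PTensor ℝ J J) : Prop :=
  ∀ x : MIdx J → ℝ, x ≠ 0 → 0 < bilin A x x

/-- The mixed-radix index linearization (0-based version of
`ivec(j,𝒥) = j₁ + Σ_{k≥2} (j_k − 1)∏_{l<k} J_l`). -/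
def ivec {N : ℕ} (J : Fin N → ℕ) (j : MIdx J) : ℕ :=
  ∑ k, (j k : ℕ) * ∏ l ∈ Finset.Iio k, J l

/-- The unfolding map `φ`: the matrix whose `(ivec j, ivec i)` entry is `A j i`. -/
noncomputable def phi {N : ℕ} {J I : Fin N → ℕ} (A : PTensor ℝ J I) :
    Matrix (Fin (∏ n, J n)) (Fin (∏ n, I n)) ℝ :=
  fun p q => ∑ j : MIdx J, ∑ i : MIdx I,
    if ivec J j = (p : ℕ) ∧ ivec I i = (q : ℕ) then A j i else 0

/-- The Tucker product `X ×{M₁,…,M_N}` applying `M_n` along mode `n`. -/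
def tucker {N : ℕ} {J : Fin N → ℕ}
    (X : MIdx J → ℝ) (M : ∀ n, Matrix (Fin (J n)) (Fin (J n)) ℝ) :
    MIdx J → ℝ :=
  fun k => ∑ j, (∏ n, M n (k n) (j n)) * X j

/-- The spectral radius of a real matrix: the supremum of the moduli of its
complex eigenvalues. -/
noncomputable def specRad {m : ℕ} (M : Matrix (Fin m) (Fin m) ℝ) : ℝ :=
  sSup {r : ℝ | ∃ (μ : ℂ) (v : Fin m → ℂ), v ≠ 0 ∧
    (M.map (fun x => (x : ℂ))).mulVec v = μ • v ∧ r = ‖μ‖}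

namespace Aux

variable {m : ℕ} (M : Matrix (Fin m) (Fin m) ℝ)

def Mc {m : ℕ} (M : Matrix (Fin m) (Fin m) ℝ) : Matrix (Fin m) (Fin m) ℂ :=
  M.map (fun x => (x : ℂ))

def eigSet {m : ℕ} (M : Matrix (Fin m) (Fin m) ℝ) : Set ℝ :=
  {r : ℝ | ∃ (μ : ℂ) (v : Fin m → ℂ), v ≠ 0 ∧
    (M.map (fun x => (x : ℂ))).mulVec v = μ • v ∧ r = ‖μ‖}

lemma mem_spectrum_iff (μ : ℂ) :
    μ ∈ spectrum ℂ (Mc M) ↔ ∃ v ≠ 0, (Mc M).mulVec v = μ • v := by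
  rw [spectrum.mem_iff]
  rw [Matrix.isUnit_iff_isUnit_det, isUnit_iff_ne_zero, not_not,
    ← Matrix.exists_mulVec_eq_zero_iff]
  constructor
  · rintro ⟨v, hv, h⟩
    refine ⟨v, hv, ?_⟩
    have := h
    rw [Matrix.sub_mulVec, Algebra.algebraMap_eq_smul_one, Matrix.smul_mulVec,
      Matrix.one_mulVec, sub_eq_zero] at this
    exact this.symm
  · rintro ⟨v, hv, h⟩
    refine ⟨v, hv, ?_⟩
    rw [Matrix.sub_mulVec, Algebra.algebraMap_eq_smul_one, Matrix.smul_mulVec,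
      Matrix.one_mulVec, sub_eq_zero, h]

lemma eigSet_eq : eigSet M = (fun z : ℂ => ‖z‖) '' (spectrum ℂ (Mc M)) := by
  ext r
  simp only [eigSet, Set.mem_setOf_eq, Set.mem_image]
  constructor
  · rintro ⟨μ, v, hv, h, rfl⟩
    exact ⟨μ, (mem_spectrum_iff M μ).mpr ⟨v, hv, h⟩, rfl⟩
  · rintro ⟨μ, hμ, rfl⟩
    obtain ⟨v, hv, h⟩ := (mem_spectrum_iff M μ).mp hμ
    exact ⟨μ, v, hv, h, rfl⟩

lemma eigSet_finite : (eigSet M).Finite := by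
  rw [eigSet_eq]
  exact (Matrix.finite_spectrum (Mc M)).image _

lemma specRad_nonneg : 0 ≤ specRad M := by
  rcases Set.eq_empty_or_nonempty (eigSet M) with h | ⟨r, hr⟩
  · rw [specRad, show {r : ℝ | ∃ (μ : ℂ) (v : Fin m → ℂ), v ≠ 0 ∧
      (M.map (fun x => (x : ℂ))).mulVec v = μ • v ∧ r = ‖μ‖} = eigSet M from rfl, h,
      Real.sSup_empty]
  · have h0 : 0 ≤ r := by
      obtain ⟨μ, v, hv, hh, rfl⟩ := hr
      positivity
    exact le_trans h0 (le_csSup (eigSet_finite M).bddAbove hr)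

lemma le_specRad {r : ℝ} (hr : r ∈ eigSet M) : r ≤ specRad M :=
  le_csSup (eigSet_finite M).bddAbove hr

lemma specRad_mem (h : (eigSet M).Nonempty) : specRad M ∈ eigSet M :=
  h.csSup_mem (eigSet_finite M)

end Aux

namespace Aux

open scoped ENNReal NNReal

attribute [local instance] Matrix.linftyOpNormedRing Matrix.linftyOpNormedAlgebra

noncomputable instance {m : ℕ} : CompleteSpace (Matrix (Fin m) (Fin m) ℂ) :=
  FiniteDimensional.complete ℂ _

lemma entry_le_norm {m : ℕ} (A : Matrix (Fin m) (Fin m) ℂ) (i j : Fin m) :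
    ‖A i j‖ ≤ ‖A‖ := by
  rw [← coe_nnnorm, ← coe_nnnorm, NNReal.coe_le_coe]
  rw [Matrix.linfty_opNNNorm_def]
  calc ‖A i j‖₊ ≤ ∑ j', ‖A i j'‖₊ :=
        Finset.single_le_sum (f := fun j' => ‖A i j'‖₊) (fun _ _ => zero_le) (Finset.mem_univ j)
    _ ≤ _ := Finset.le_sup (f := fun i => ∑ j', ‖A i j'‖₊) (Finset.mem_univ i)

lemma Mc_pow {m : ℕ} (M : Matrix (Fin m) (Fin m) ℝ) (t : ℕ) :
    Mc (M ^ t) = (Mc M) ^ t := by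
  have h := map_pow ((algebraMap ℝ ℂ).mapMatrix) M t
  simpa [Mc, RingHom.mapMatrix_apply, Complex.coe_algebraMap] using h

lemma specRadius_le {m : ℕ} (M : Matrix (Fin m) (Fin m) ℝ) :
    spectralRadius ℂ (Mc M) ≤ ENNReal.ofReal (specRad M) := by
  rw [spectralRadius]
  refine iSup₂_le fun k hk => ?_
  rw [← ENNReal.ofReal_coe_nnreal, coe_nnnorm]
  refine ENNReal.ofReal_le_ofReal ?_
  refine le_specRad M ?_
  rw [eigSet_eq]
  exact ⟨k, hk, rfl⟩

lemma eventually_entry_le {m : ℕ} (M : Matrix (Fin m) (Fin m) ℝ) {ε : ℝ} (hε : 0 < ε) :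
    ∀ᶠ t in Filter.atTop, ∀ i j, |(M ^ t) i j| ≤ (specRad M + ε) ^ t := by
  set b := specRad M + ε with hbdef
  have hb : 0 < b := lt_of_lt_of_le hε (le_add_of_nonneg_left (specRad_nonneg M))
  have hlt : spectralRadius ℂ (Mc M) < ENNReal.ofReal b :=
    lt_of_le_of_lt (specRadius_le M)
      ((ENNReal.ofReal_lt_ofReal_iff hb).mpr (by linarith [specRad_nonneg M]))
  have htd := spectrum.pow_nnnorm_pow_one_div_tendsto_nhds_spectralRadius (Mc M)
  have hev := htd.eventually_lt_const hlt
  filter_upwards [hev, Filter.eventually_ge_atTop 1] with t ht ht1 i j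
  have ht0 : (t : ℝ) ≠ 0 := by positivity
  have hx : ((‖(Mc M) ^ t‖₊ : ℝ≥0∞) ^ (1 / t : ℝ)) ^ (t : ℝ) ≤ (ENNReal.ofReal b) ^ (t : ℝ) :=
    ENNReal.rpow_le_rpow ht.le (by positivity)
  rw [← ENNReal.rpow_mul, one_div, inv_mul_cancel₀ ht0, ENNReal.rpow_one,
    ENNReal.ofReal_rpow_of_pos hb, Real.rpow_natCast] at hx
  rw [← ENNReal.ofReal_coe_nnreal, coe_nnnorm, ENNReal.ofReal_le_ofReal_iff (by positivity)] at hx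
  have hentry : |(M ^ t) i j| = ‖((Mc M) ^ t) i j‖ := by
    rw [← Mc_pow]
    simp [Mc, Complex.norm_real, Real.norm_eq_abs]
  rw [hentry]
  exact le_trans (entry_le_norm _ i j) hx

end Aux


section TuckerLemmas

open Filter

lemma tucker_one {N : ℕ} {J : Fin N → ℕ} (X : MIdx J → ℝ) :
    tucker X (fun _ => 1) = X := by
  funext k
  simp only [tucker, Matrix.one_apply]
  rw [Finset.sum_eq_single k]
  · simp
  · intro j _ hj
    have hne : ¬ ∀ n, k n = j n := fun h => hj (funext fun n => (h n).symm)
    push_neg at hne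
    obtain ⟨n, hn⟩ := hne
    have hz : (∏ x, if k x = j x then (1:ℝ) else 0) = 0 :=
      Finset.prod_eq_zero (Finset.mem_univ n) (if_neg hn)
    rw [hz, zero_mul]
  · intro h
    exact absurd (Finset.mem_univ k) h

lemma tucker_tucker {N : ℕ} {J : Fin N → ℕ} (X : MIdx J → ℝ)
    (M M' : ∀ n, Matrix (Fin (J n)) (Fin (J n)) ℝ) :
    tucker (tucker X M') M = tucker X (fun n => M n * M' n) := by
  funext k
  simp only [tucker, Matrix.mul_apply]
  calc ∑ j : MIdx J, (∏ n, M n (k n) (j n)) * ∑ i : MIdx J, (∏ n, M' n (j n) (i n)) * X i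
      = ∑ j : MIdx J, ∑ i : MIdx J,
          ((∏ n, M n (k n) (j n)) * (∏ n, M' n (j n) (i n))) * X i := by
        simp_rw [Finset.mul_sum, mul_assoc]
    _ = ∑ i : MIdx J, (∑ j : MIdx J, ∏ n, M n (k n) (j n) * M' n (j n) (i n)) * X i := by
        rw [Finset.sum_comm]
        simp_rw [← Finset.prod_mul_distrib, Finset.sum_mul]
    _ = _ := by
        refine Finset.sum_congr rfl fun i _ => ?_
        rw [← Fintype.prod_sum (f := fun n x => M n (k n) x * M' n x (i n))]

lemma sol_eq {N : ℕ} {J : Fin N → ℕ} (A : ∀ n, Matrix (Fin (J n)) (Fin (J n)) ℝ)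
    (X : ℕ → MIdx J → ℝ) (hX : ∀ t, X (t + 1) = tucker (X t) A) :
    ∀ t, X t = tucker (X 0) (fun n => A n ^ t) := by
  intro t
  induction t with
  | zero => simp only [pow_zero]; rw [tucker_one]
  | succ t ih =>
      rw [hX t, ih, tucker_tucker,
        show (fun n => A n * A n ^ t) = fun n => A n ^ (t + 1) from
          funext fun n => (pow_succ' (A n) t).symm]

end TuckerLemmas

/-- for the dynamics `X_{t+1} = X_t ×{A₁,…,A_N}`, if
`∏_n ρ^{(n)} < 1` the equilibrium `0` is asymptotically stable, and if
`∏_n ρ^{(n)} > 1` it is unstable. -/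
theorem tucker_spectral_stability {N : ℕ} {J : Fin N → ℕ}
    (A : ∀ n, Matrix (Fin (J n)) (Fin (J n)) ℝ) :
    ((∏ n, specRad (A n)) < 1 →
      ∀ X : ℕ → MIdx J → ℝ, (∀ t, X (t + 1) = tucker (X t) A) →
        Filter.Tendsto (fun t => fro (X t)) Filter.atTop (nhds 0)) ∧
    (1 < (∏ n, specRad (A n)) →
      ∃ X : ℕ → MIdx J → ℝ, (∀ t, X (t + 1) = tucker (X t) A) ∧
        ∀ M : ℝ, ∃ t, M < fro (X t)) := by
  constructor
  · -- stable case
    intro h X hX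
    have hcont : Continuous fun ε : ℝ => ∏ n, (specRad (A n) + ε) :=
      continuous_finset_prod _ fun n _ => by continuity
    have htend : Filter.Tendsto (fun ε : ℝ => ∏ n, (specRad (A n) + ε))
        (nhdsWithin 0 (Set.Ioi 0)) (nhds (∏ n, (specRad (A n) + 0))) :=
      (hcont.tendsto 0).mono_left nhdsWithin_le_nhds
    have h0 : (∏ n, (specRad (A n) + 0)) < 1 := by simpa using h
    obtain ⟨ε, hεlt, hεpos⟩ := (Filter.Eventually.and (htend.eventually_lt_const h0)
      (eventually_mem_nhdsWithin)).exists
    rw [Set.mem_Ioi] at hεpos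
    set r := ∏ n, (specRad (A n) + ε) with hr
    have hrpos : 0 < r :=
      Finset.prod_pos fun n _ => by linarith [Aux.specRad_nonneg (A n)]
    have hev : ∀ᶠ t in Filter.atTop, ∀ n, ∀ i j, |(A n ^ t) i j| ≤ (specRad (A n) + ε) ^ t :=
      Filter.eventually_all.mpr fun n => Aux.eventually_entry_le (A n) hεpos
    have hfro : ∀ᶠ t in Filter.atTop, fro (X t) ≤
        (Real.sqrt (Fintype.card (MIdx J)) * ∑ j, |X 0 j|) * r ^ t := by
      filter_upwards [hev] with t ht
      rw [sol_eq A X hX t]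
      set C := ∑ j : MIdx J, |X 0 j| with hC
      have hC0 : 0 ≤ C := Finset.sum_nonneg fun _ _ => abs_nonneg _
      have hk : ∀ k : MIdx J, |tucker (X 0) (fun n => A n ^ t) k| ≤ r ^ t * C := by
        intro k
        refine (Finset.abs_sum_le_sum_abs _ _).trans ?_
        rw [hC, Finset.mul_sum]
        refine Finset.sum_le_sum fun j _ => ?_
        rw [abs_mul]
        refine mul_le_mul_of_nonneg_right ?_ (abs_nonneg _)
        rw [Finset.abs_prod]
        calc ∏ n, |(A n ^ t) (k n) (j n)| ≤ ∏ n, (specRad (A n) + ε) ^ t :=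
              Finset.prod_le_prod (fun _ _ => abs_nonneg _) (fun n _ => ht n (k n) (j n))
          _ = r ^ t := by rw [Finset.prod_pow]
      rw [fro]
      have hsum : ∑ k : MIdx J, (tucker (X 0) (fun n => A n ^ t) k) ^ 2 ≤
          ∑ _k : MIdx J, (r ^ t * C) ^ 2 :=
        Finset.sum_le_sum fun k _ => by
          rw [← sq_abs]; exact pow_le_pow_left₀ (abs_nonneg _) (hk k) 2
      refine (Real.sqrt_le_sqrt hsum).trans ?_
      rw [Finset.sum_const, Finset.card_univ, nsmul_eq_mul,
        Real.sqrt_mul (by positivity), Real.sqrt_sq (by positivity)]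
      exact le_of_eq (by push_cast; ring)
    have hzero : Filter.Tendsto
        (fun t => (Real.sqrt (Fintype.card (MIdx J)) * ∑ j, |X 0 j|) * r ^ t)
        Filter.atTop (nhds 0) := by
      have := (tendsto_pow_atTop_nhds_zero_of_lt_one hrpos.le hεlt).const_mul
        (Real.sqrt (Fintype.card (MIdx J)) * ∑ j, |X 0 j|)
      simpa using this
    exact squeeze_zero' (Filter.Eventually.of_forall fun t => Real.sqrt_nonneg _) hfro hzero
  · -- unstable case
    intro h
    have hne : ∀ n, (Aux.eigSet (A n)).Nonempty := by
      intro n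
      by_contra hn
      rw [Set.not_nonempty_iff_eq_empty] at hn
      have h0 : specRad (A n) = 0 := by
        show sSup (Aux.eigSet (A n)) = 0
        rw [hn, Real.sSup_empty]
      have : (∏ n, specRad (A n)) = 0 := Finset.prod_eq_zero (Finset.mem_univ n) h0
      rw [this] at h
      linarith
    have hmem : ∀ n, specRad (A n) ∈ Aux.eigSet (A n) := fun n =>
      (hne n).csSup_mem (Aux.eigSet_finite (A n))
    choose μ v hv heig habs using hmem
    set μt : ℂ := ∏ n, μ n with hμt
    have habsμt : ‖μt‖ = ∏ n, specRad (A n) := by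
      rw [hμt, norm_prod]
      exact Finset.prod_congr rfl fun n _ => (habs n).symm
    have hμt1 : 1 < ‖μt‖ := by rw [habsμt]; exact h
    set w : MIdx J → ℂ := fun j => ∏ n, v n (j n) with hw
    -- w is nonzero somewhere
    have hwne : ∃ k0 : MIdx J, w k0 ≠ 0 := by
      have : ∀ n, ∃ x, v n x ≠ 0 := fun n => Function.ne_iff.mp (hv n)
      choose idx hidx using this
      exact ⟨idx, Finset.prod_ne_zero_iff.mpr fun n _ => hidx n⟩
    obtain ⟨k0, hk0⟩ := hwne
    -- key eigen identity
    have key : ∀ k : MIdx J,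
        ∑ j : MIdx J, ((∏ n, A n (k n) (j n) : ℝ) : ℂ) * w j = μt * w k := by
      intro k
      have hterm : ∀ j : MIdx J, ((∏ n, A n (k n) (j n) : ℝ) : ℂ) * w j =
          ∏ n, ((A n (k n) (j n) : ℂ) * v n (j n)) := by
        intro j
        rw [hw, Complex.ofReal_prod, ← Finset.prod_mul_distrib]
      simp_rw [hterm]
      rw [← Fintype.prod_sum (f := fun n x => (A n (k n) x : ℂ) * v n x)]
      have hn : ∀ n, (∑ x, (A n (k n) x : ℂ) * v n x) = μ n * v n (k n) := by
        intro n
        have := congrFun (heig n) (k n)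
        simpa [Matrix.mulVec, dotProduct, Matrix.map_apply] using this
      rw [Finset.prod_congr rfl fun n _ => hn n, Finset.prod_mul_distrib, hμt, hw]
    set Z : ℕ → MIdx J → ℂ := fun t k => μt ^ t * w k with hZdef
    have hZ : ∀ t (k : MIdx J),
        ∑ j : MIdx J, ((∏ n, A n (k n) (j n) : ℝ) : ℂ) * Z t j = Z (t + 1) k := by
      intro t k
      simp only [hZdef]
      calc ∑ j : MIdx J, ((∏ n, A n (k n) (j n) : ℝ) : ℂ) * (μt ^ t * w j)
          = μt ^ t * ∑ j : MIdx J, ((∏ n, A n (k n) (j n) : ℝ) : ℂ) * w j := by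
            rw [Finset.mul_sum]; exact Finset.sum_congr rfl fun j _ => by ring
        _ = μt ^ (t + 1) * w k := by rw [key k]; ring
    -- real and imaginary parts are solutions
    have hrec : ∀ (pt : ℂ → ℝ), (∀ s : Finset (MIdx J), ∀ f : MIdx J → ℂ,
          pt (∑ j ∈ s, f j) = ∑ j ∈ s, pt (f j)) →
        (∀ (r : ℝ) (z : ℂ), pt ((r : ℂ) * z) = r * pt z) →
        ∀ t, (fun k => pt (Z (t + 1) k)) = tucker (fun k => pt (Z t k)) A := by
      intro pt hsum hmul t
      funext k
      rw [← hZ t k, tucker, hsum]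
      exact Finset.sum_congr rfl fun j _ => (hmul _ _)
    have hre : ∀ t, (fun k => (Z (t + 1) k).re) = tucker (fun k => (Z t k).re) A :=
      hrec Complex.re (fun s f => Complex.re_sum s f)
        (fun r z => by simp [Complex.mul_re])
    have him : ∀ t, (fun k => (Z (t + 1) k).im) = tucker (fun k => (Z t k).im) A :=
      hrec Complex.im (fun s f => Complex.im_sum s f)
        (fun r z => by simp [Complex.mul_im])
    -- norm identity
    set c : ℝ := ∑ k : MIdx J, ‖w k‖ ^ 2 with hc
    have hcpos : 0 < c := by
      have h1 : 0 < ‖w k0‖ ^ 2 :=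
        pow_pos (norm_pos_iff.mpr hk0) 2
      refine lt_of_lt_of_le h1 ?_
      exact Finset.single_le_sum (f := fun k => ‖w k‖ ^ 2)
        (fun _ _ => by positivity) (Finset.mem_univ k0)
    have hfrosq : ∀ x : MIdx J → ℝ, fro x ^ 2 = ∑ k, x k ^ 2 := by
      intro x
      rw [fro, Real.sq_sqrt (Finset.sum_nonneg fun _ _ => sq_nonneg _)]
    have hnorm : ∀ t, fro (fun k => (Z t k).re) ^ 2 + fro (fun k => (Z t k).im) ^ 2 =
        (‖μt‖ ^ 2) ^ t * c := by
      intro t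
      rw [hfrosq, hfrosq, ← Finset.sum_add_distrib, hc, Finset.mul_sum]
      refine Finset.sum_congr rfl fun k _ => ?_
      have habsZ : (Z t k).re ^ 2 + (Z t k).im ^ 2 = ‖Z t k‖ ^ 2 := by
        rw [Complex.sq_norm, Complex.normSq_apply]; ring
      rw [habsZ, hZdef]
      simp only [norm_mul, norm_pow]
      ring
    have hfro_nonneg : ∀ x : MIdx J → ℝ, 0 ≤ fro x := fun x => Real.sqrt_nonneg _
    set aμ := ‖μt‖ ^ 2 with haμ
    have haμ1 : 1 < aμ := by
      rw [haμ]
      nlinarith [hμt1]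
    have htends := tendsto_pow_atTop_atTop_of_one_lt haμ1
    by_cases hcase : ∀ M : ℝ, ∃ t, M < fro (fun k => (Z t k).re)
    · exact ⟨fun t k => (Z t k).re, fun t => (hre t).symm ▸ rfl, hcase⟩
    · push_neg at hcase
      obtain ⟨Mb, hMb⟩ := hcase
      refine ⟨fun t k => (Z t k).im, fun t => ?_, fun M' => ?_⟩
      · exact (him t)
      · set B := max M' 0 with hB
        have hB0 : 0 ≤ B := le_max_right _ _
        obtain ⟨t, ht⟩ := (htends.eventually_gt_atTop ((Mb ^ 2 + B ^ 2) / c)).exists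
        refine ⟨t, ?_⟩
        have hgt : Mb ^ 2 + B ^ 2 < aμ ^ t * c := (div_lt_iff₀ hcpos).mp ht
        have hid := hnorm t
        have hMbt := hMb t
        have h2 : B ^ 2 < fro (fun k => (Z t k).im) ^ 2 := by
          nlinarith [hfro_nonneg (fun k => (Z t k).re)]
        have hBlt : B < fro (fun k => (Z t k).im) := by
          by_contra hcon
          push_neg at hcon
          have := pow_le_pow_left₀ (hfro_nonneg _) hcon 2
          linarith
        exact lt_of_le_of_lt (le_max_left M' 0) hBlt
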